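/- Let c ∈ ℂ and R > 0, let f : ℂ → ℂ be complex differentiable on an open set containing the closed disc {z : |z − c| ≤ R}, and let μ₁, …, μ_N be pairwise distinct complex numbers lying in the open disc {z : |z − c| < R}. Then (1/(2πi)) · ∮_{|z−c|=R} f(z) / ∏_{k=1}^{N} (z − μ_k) dz = Σ_{j=1}^{N} f(μ_j) / ∏_{k≠j} (μ_j − μ_k). -/

import Mathlib

open Complex Finset

lemma circleIntegral_finset_sum {ι : Type*} (s : Finset ι) (F : ι → ℂ → ℂ) (c : ℂ) (R : ℝ)
    (h : ∀ i ∈ s, CircleIntegrable (F i) c R) :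
    (∮ z in C(c, R), ∑ i ∈ s, F i z) = ∑ i ∈ s, ∮ z in C(c, R), F i z := by
  simp only [circleIntegral, smul_sum]
  exact intervalIntegral.integral_finset_sum fun i hi =>
    (circleIntegrable_iff R).mp (h i hi)

lemma partial_fractions {N : ℕ} (hN : 0 < N) (μ : Fin N → ℂ)
    (hdist : Function.Injective μ) (z : ℂ) (hz : ∀ k, z ≠ μ k) :
    (∏ k, (z - μ k))⁻¹ =
      ∑ j, (∏ k ∈ Finset.univ.erase j, (μ j - μ k))⁻¹ * (z - μ j)⁻¹ := by
  classical
  have hbasis := Lagrange.sum_basis (s := Finset.univ) (v := μ) hdist.injOn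
    (univ_nonempty_iff.2 (Fin.pos_iff_nonempty.1 hN))
  have heval := congrArg (Polynomial.eval z) hbasis
  simp only [Polynomial.eval_finset_sum, Polynomial.eval_one, Lagrange.basis,
    Polynomial.eval_prod, Lagrange.basisDivisor, Polynomial.eval_mul, Polynomial.eval_C,
    Polynomial.eval_sub, Polynomial.eval_X] at heval
  have hprod_ne : (∏ k, (z - μ k)) ≠ 0 :=
    prod_ne_zero_iff.2 fun k _ => sub_ne_zero.2 (hz k)
  have key : ∀ j : Fin N,
      (∏ k ∈ Finset.univ.erase j, (μ j - μ k))⁻¹ * (z - μ j)⁻¹ =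
        (∏ k ∈ Finset.univ.erase j, ((μ j - μ k)⁻¹ * (z - μ k))) *
          (∏ k, (z - μ k))⁻¹ := by
    intro j
    have hall : (∏ k, (z - μ k)) =
        (z - μ j) * ∏ k ∈ Finset.univ.erase j, (z - μ k) :=
      (Finset.mul_prod_erase Finset.univ _ (Finset.mem_univ j)).symm
    have herase : (∏ k ∈ Finset.univ.erase j, (z - μ k)) ≠ 0 :=
      prod_ne_zero_iff.2 fun k _ => sub_ne_zero.2 (hz k)
    have hj : z - μ j ≠ 0 := sub_ne_zero.2 (hz j)
    have hP : (∏ k ∈ Finset.univ.erase j, (μ j - μ k)) ≠ 0 :=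
      prod_ne_zero_iff.2 fun k hk =>
        sub_ne_zero.2 fun h => (Finset.mem_erase.1 hk).1 (hdist h.symm)
    rw [Finset.prod_mul_distrib, Finset.prod_inv_distrib, hall, mul_inv]
    field_simp
  calc (∏ k, (z - μ k))⁻¹
      = (∑ j, ∏ k ∈ Finset.univ.erase j, ((μ j - μ k)⁻¹ * (z - μ k))) *
          (∏ k, (z - μ k))⁻¹ := by rw [heval, one_mul]
    _ = ∑ j, (∏ k ∈ Finset.univ.erase j, (μ j - μ k))⁻¹ * (z - μ j)⁻¹ := by
        rw [Finset.sum_mul]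
        exact Finset.sum_congr rfl fun j _ => (key j).symm

/-- **Proposition 3** (contour-integral representation of divided differences, distinct points).
If `f` is analytic on an open set containing the closed disc of center `c` and radius `R`,
and `μ 1, …, μ N` are pairwise distinct points in the open disc, then
`(1/(2πi)) ∮_{|z-c|=R} f(z)/Ω(z) dz = f[μ 1, …, μ N]`, where `Ω(z) = ∏ (z - μ k)`
and the divided difference is given by the sum formula. -/
theorem divided_difference_contour_integral
    (c : ℂ) (R : ℝ) (hR : 0 < R)
    (f : ℂ → ℂ) (U : Set ℂ) (hU : IsOpen U)
    (hUsub : Metric.closedBall c R ⊆ U)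
    (hf : DifferentiableOn ℂ f U)
    (N : ℕ) (hN : 0 < N) (μ : Fin N → ℂ)
    (hdist : Function.Injective μ)
    (hμ : ∀ j, μ j ∈ Metric.ball c R) :
    (2 * Real.pi * Complex.I)⁻¹ • (∮ z in C(c, R), f z / ∏ k, (z - μ k)) =
      ∑ j, f (μ j) / ∏ k ∈ Finset.univ.erase j, (μ j - μ k) := by
  classical
  have hball : DiffContOnCl ℂ f (Metric.ball c R) := by
    refine ⟨hf.mono fun x hx => hUsub (Metric.ball_subset_closedBall hx), ?_⟩
    rw [closure_ball c hR.ne']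
    exact hf.continuousOn.mono hUsub
  -- continuity of f on the sphere
  have hfc : ContinuousOn f (Metric.sphere c R) :=
    (hf.continuousOn.mono hUsub).mono Metric.sphere_subset_closedBall
  set F : Fin N → ℂ → ℂ := fun j z =>
    (∏ k ∈ Finset.univ.erase j, (μ j - μ k))⁻¹ • ((z - μ j)⁻¹ • f z) with hF
  have hint : ∀ j ∈ Finset.univ, CircleIntegrable (F j) c R := by
    intro j _
    refine ContinuousOn.circleIntegrable hR.le ?_
    refine ContinuousOn.smul (continuousOn_const (c := (∏ k ∈ Finset.univ.erase j, (μ j - μ k))⁻¹)) ?_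
    refine ContinuousOn.smul (f := fun z : ℂ => (z - μ j)⁻¹) ?_ hfc
    refine ContinuousOn.inv₀ (Continuous.continuousOn (by fun_prop)) ?_
    intro z hz
    refine sub_ne_zero.2 (fun h => ?_)
    have := hμ j
    rw [← h] at this
    exact absurd (Metric.mem_ball.1 this) (not_lt.2 (le_of_eq (Metric.mem_sphere.1 hz).symm))
  have hcongr : (∮ z in C(c, R), f z / ∏ k, (z - μ k)) = ∮ z in C(c, R), ∑ j, F j z := by
    refine circleIntegral.integral_congr hR.le fun z hz => ?_
    have hzk : ∀ k, z ≠ μ k := by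
      intro k h
      have := hμ k
      rw [← h] at this
      exact absurd (Metric.mem_ball.1 this) (not_lt.2 (le_of_eq (Metric.mem_sphere.1 hz).symm))
    simp only [hF, div_eq_mul_inv, smul_eq_mul]
    rw [partial_fractions hN μ hdist z hzk, Finset.mul_sum]
    exact Finset.sum_congr rfl fun j _ => by ring
  rw [hcongr, circleIntegral_finset_sum _ _ _ _ hint, smul_sum]
  refine Finset.sum_congr rfl fun j _ => ?_
  have hC : (∮ z in C(c, R), F j z) =
      (∏ k ∈ Finset.univ.erase j, (μ j - μ k))⁻¹ • ∮ z in C(c, R), (z - μ j)⁻¹ • f z := by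
    simpa [hF] using circleIntegral.integral_smul
      ((∏ k ∈ Finset.univ.erase j, (μ j - μ k))⁻¹) (fun z => (z - μ j)⁻¹ • f z) c R
  rw [hC, hball.circleIntegral_sub_inv_smul (hμ j)]
  simp only [smul_eq_mul, div_eq_mul_inv]
  have h2 : (2 * (Real.pi : ℂ) * Complex.I) ≠ 0 := by
    simp [Real.pi_ne_zero, Complex.I_ne_zero]
  field_simp
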